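/- Let Ξ ⊆ ℝ^d be a nonempty open connected set, let 𝒢 : Ξ → ℝ^m be real analytic with Jacobian 𝒥(ξ) and characteristic rank ρ = max_{ξ∈Ξ} rank 𝒥(ξ), let A be an m×k real matrix of rank k, let ℒ = {Az : z ∈ ℝ^k}, let ℳ = {𝒢(ξ) : ξ ∈ Ξ}, and let 𝔯 be the characteristic rank of the map G(ξ, ζ) = 𝒢(ξ) + Aζ on Ξ × ℝ^k. Then: (i) if there exists a point x ∈ ℳ such that ℳ is a C² submanifold of dimension ρ in a neighborhood of x and T_ℳ(x) ∩ ℒ = {0} (a well-posed point), then 𝔯 = ρ + k; (ii) conversely, if ℳ is a C² submanifold of dimension ρ in a neighborhood of each of its points and 𝔯 = ρ + k, then for almost every ξ ∈ Ξ (with respect to Lebesgue measure) the point x = 𝒢(ξ) is well-posed. -/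

import Mathlib

open MeasureTheory

/-- `M` is a `C²` submanifold of `ℝ^m` of dimension `ρ` in a neighborhood of `x`,
witnessed by the open set `U` and the local `C²` submersion `φ : U → ℝ^{m-ρ}`. -/
def SubmanifoldDataAt {m : ℕ} (M : Set (Fin m → ℝ)) (ρ : ℕ) (x : Fin m → ℝ)
    (U : Set (Fin m → ℝ)) (φ : (Fin m → ℝ) → (Fin (m - ρ) → ℝ)) : Prop :=
  IsOpen U ∧ x ∈ U ∧ ContDiffOn ℝ 2 φ U ∧
    (∀ y ∈ U, Function.Surjective (fderiv ℝ φ y)) ∧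
    M ∩ U = {y ∈ U | φ y = 0}

/-- `M` is a `C²` submanifold of dimension `ρ` in a neighborhood of `x`. -/
def IsManifoldAt {m : ℕ} (M : Set (Fin m → ℝ)) (ρ : ℕ) (x : Fin m → ℝ) : Prop :=
  ∃ U φ, SubmanifoldDataAt M ρ x U φ

/-- `x ∈ M` is a well-posed point: `M` is a `C²` submanifold of dimension `ρ` near `x`
and the tangent space `T_M(x) = ker Dφ(x)` meets the linear space `L` only in `0`. -/
def WellPosedAt {m : ℕ} (M : Set (Fin m → ℝ)) (L : Submodule ℝ (Fin m → ℝ))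
    (ρ : ℕ) (x : Fin m → ℝ) : Prop :=
  ∃ U φ, SubmanifoldDataAt M ρ x U φ ∧ LinearMap.ker (fderiv ℝ φ x).toLinearMap ⊓ L = ⊥

/-- The rank of the Jacobian of a map at a point. -/
noncomputable def jRank {E F : Type*} [NormedAddCommGroup E] [NormedSpace ℝ E]
    [NormedAddCommGroup F] [NormedSpace ℝ F] (G : E → F) (θ : E) : ℕ :=
  Module.finrank ℝ (LinearMap.range (fderiv ℝ G θ).toLinearMap)


open MeasureTheory

section Helpers

open Module

/-- The Gram determinant of a finite family of vectors in `ℝ^M` is nonzero iff the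
family is linearly independent. -/
lemma gram_det_ne_zero_iff {r M : ℕ} (w : Fin r → (Fin M → ℝ)) :
    (Matrix.of fun i j => dotProduct (w i) (w j)).det ≠ 0 ↔ LinearIndependent ℝ w := by
  have key : ∀ c : Fin r → ℝ, ∀ i, (Matrix.of fun i j => dotProduct (w i) (w j)).mulVec c i
      = dotProduct (w i) (∑ j, c j • w j) := by
    intro c i
    simp only [Matrix.mulVec, dotProduct, Matrix.of_apply, Finset.sum_apply,
      Pi.smul_apply, smul_eq_mul, Finset.mul_sum, Finset.sum_mul]
    rw [Finset.sum_comm]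
    refine Finset.sum_congr rfl fun j _ => Finset.sum_congr rfl fun l _ => by ring
  constructor
  · intro hdet
    rw [Fintype.linearIndependent_iff]
    intro c hc
    have hmv : (Matrix.of fun i j => dotProduct (w i) (w j)).mulVec c = 0 := by
      funext i
      rw [key c i, hc]
      simp [dotProduct]
    have hc0 : c = 0 := by
      by_contra hne
      exact hdet (Matrix.exists_mulVec_eq_zero_iff.mp ⟨c, hne, hmv⟩)
    intro i; rw [hc0]; rfl
  · intro hw hdet
    obtain ⟨c, hc0, hmv⟩ := Matrix.exists_mulVec_eq_zero_iff.mpr hdet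
    set u : Fin M → ℝ := ∑ j, c j • w j with hu
    have hlin : ∀ z : Fin M → ℝ, dotProduct (∑ j, c j • w j) z
        = ∑ j, c j * dotProduct (w j) z := by
      intro z
      simp only [dotProduct, Finset.sum_apply, Pi.smul_apply, smul_eq_mul,
        Finset.sum_mul, Finset.mul_sum]
      rw [Finset.sum_comm]
      refine Finset.sum_congr rfl fun j _ => Finset.sum_congr rfl fun l _ => by ring
    have hdot : dotProduct u u = 0 := by
      have h1 : dotProduct u u = ∑ i, c i * dotProduct (w i) u := hlin u
      rw [h1]
      have : ∀ i, dotProduct (w i) u = 0 := by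
        intro i
        rw [← key c i, hmv]; rfl
      simp [this]
    have hu0 : u = 0 := dotProduct_self_eq_zero.mp hdot
    exact hc0 (funext (Fintype.linearIndependent_iff.mp hw c hu0))

/-- From a family whose images are independent, bound the rank from below. -/
lemma card_le_finrank_range_of_indep {E : Type*} [AddCommGroup E] [Module ℝ E] {M r : ℕ}
    (T : E →ₗ[ℝ] (Fin M → ℝ)) (v : Fin r → E)
    (h : LinearIndependent ℝ (fun i => T (v i))) :
    r ≤ finrank ℝ (LinearMap.range T) := by
  have h1 : Submodule.span ℝ (Set.range fun i => T (v i)) ≤ LinearMap.range T := by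
    rw [Submodule.span_le]; rintro _ ⟨i, rfl⟩; exact ⟨v i, rfl⟩
  have h2 := finrank_span_eq_card h
  calc r = Fintype.card (Fin r) := (Fintype.card_fin r).symm
    _ = finrank ℝ (Submodule.span ℝ (Set.range fun i => T (v i))) := h2.symm
    _ ≤ finrank ℝ (LinearMap.range T) := Submodule.finrank_mono h1

/-- Conversely, extract a family with independent images from a rank bound. -/
lemma exists_indep_of_le_finrank_range {E : Type*} [AddCommGroup E] [Module ℝ E] {M r : ℕ}
    (T : E →ₗ[ℝ] (Fin M → ℝ)) (h : r ≤ finrank ℝ (LinearMap.range T)) :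
    ∃ v : Fin r → E, LinearIndependent ℝ (fun i => T (v i)) := by
  let B := Module.finBasis ℝ (LinearMap.range T)
  set b' : Fin r → LinearMap.range T := fun i => B (Fin.castLE h i) with hb'
  have hb'i : LinearIndependent ℝ b' := B.linearIndependent.comp _ (Fin.castLE_injective h)
  have hbi : LinearIndependent ℝ (fun i => ((b' i : (Fin M → ℝ)))) :=
    hb'i.map' (LinearMap.range T).subtype (Submodule.ker_subtype _)
  choose v hv using fun i => LinearMap.mem_range.mp (b' i).2
  refine ⟨v, ?_⟩
  have : (fun i => T (v i)) = fun i => ((b' i : (Fin M → ℝ))) := funext hv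
  rw [this]; exact hbi

lemma linearIndependent_single_one {k : ℕ} :
    LinearIndependent ℝ (fun i : Fin k => Pi.single i (1:ℝ)) := by
  have := (Pi.basisFun ℝ (Fin k)).linearIndependent
  have h : ⇑(Pi.basisFun ℝ (Fin k)) = fun i : Fin k => Pi.single i (1:ℝ) := by
    funext i; exact Pi.basisFun_apply ℝ (Fin k) i
  rwa [h] at this

lemma injective_of_indep_single {k M : ℕ} (T : (Fin k → ℝ) →ₗ[ℝ] (Fin M → ℝ))
    (h : LinearIndependent ℝ (fun i => T (Pi.single i 1))) : Function.Injective T := by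
  rw [← LinearMap.ker_eq_bot, Submodule.eq_bot_iff]
  intro x hx
  have hexp : ∑ i, x i • (Pi.single i (1:ℝ) : Fin k → ℝ) = x := by
    have h1 : ∀ i, x i • (Pi.single i (1:ℝ) : Fin k → ℝ) = Pi.single i (x i) := by
      intro i; rw [← Pi.single_smul, smul_eq_mul, mul_one]
    simp only [h1]
    exact Finset.univ_sum_single x
  have hsum : ∑ i, x i • T (Pi.single i 1) = 0 := by
    have h2 : ∑ i, x i • T (Pi.single i 1) = T x := by
      conv_rhs => rw [← hexp]
      rw [map_sum]
      exact Finset.sum_congr rfl fun i _ => (T.map_smul _ _).symm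
    rw [h2]
    exact hx
  funext i
  exact Fintype.linearIndependent_iff.mp h x hsum i

/-- Determinant of an analytic matrix-valued function is analytic. -/
lemma analyticOnNhd_det {E : Type*} [NormedAddCommGroup E] [NormedSpace ℝ E] {n : ℕ}
    {s : Set E} {f : E → Matrix (Fin n) (Fin n) ℝ}
    (hf : ∀ i j, AnalyticOnNhd ℝ (fun x => f x i j) s) :
    AnalyticOnNhd ℝ (fun x => (f x).det) s := by
  have h : (fun x => (f x).det)
      = fun x => ∑ σ : Equiv.Perm (Fin n), ((Equiv.Perm.sign σ : ℤ) : ℝ) * ∏ i, f x (σ i) i := by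
    funext x; rw [Matrix.det_apply']
  rw [h]
  exact Finset.analyticOnNhd_fun_sum _ fun σ _ =>
    analyticOnNhd_const.mul (Finset.analyticOnNhd_fun_prod _ fun i _ => hf (σ i) i)

/-- Determinant of a continuous matrix-valued function is continuous on a set. -/
lemma continuousOn_det' {E : Type*} [TopologicalSpace E] {n : ℕ}
    {s : Set E} {f : E → Matrix (Fin n) (Fin n) ℝ}
    (hf : ∀ i j, ContinuousOn (fun x => f x i j) s) :
    ContinuousOn (fun x => (f x).det) s := by
  have h : (fun x => (f x).det)
      = fun x => ∑ σ : Equiv.Perm (Fin n), ((Equiv.Perm.sign σ : ℤ) : ℝ) * ∏ i, f x (σ i) i := by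
    funext x; rw [Matrix.det_apply']
  rw [h]
  exact continuousOn_finset_sum _ fun σ _ =>
    continuousOn_const.mul (continuousOn_finset_prod _ fun i _ => hf (σ i) i)

end Helpers

section Density

open Filter Metric Module
open scoped Topology ENNReal

set_option maxHeartbeats 1000000 in
/-- If `x` is a Lebesgue density point of a set `s` on which a differentiable
function `g` vanishes, then the derivative of `g` at `x` vanishes. -/
lemma fderiv_eq_zero_of_zero_on_density {E F : Type*} [NormedAddCommGroup E] [NormedSpace ℝ E]
    [FiniteDimensional ℝ E] [MeasurableSpace E] [BorelSpace E]
    [NormedAddCommGroup F] [NormedSpace ℝ F]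
    (μ : Measure E) [μ.IsAddHaarMeasure]
    {s : Set E} {g : E → F} {x : E} (hx : x ∈ s) (hg0 : ∀ y ∈ s, g y = 0)
    (hd : DifferentiableAt ℝ g x)
    (hdens : Tendsto (fun r => μ (s ∩ closedBall x r) / μ (closedBall x r)) (𝓝[>] 0) (𝓝 1)) :
    fderiv ℝ g x = 0 := by
  set T := fderiv ℝ g x with hT
  by_contra hT0
  obtain ⟨v0, hv0⟩ : ∃ v, T v ≠ 0 := by
    by_contra h; push_neg at h
    exact hT0 (ContinuousLinearMap.ext fun v => by simpa using h v)
  have hv0ne : v0 ≠ 0 := fun h => hv0 (by simp [h])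
  set v : E := ‖v0‖⁻¹ • v0 with hv
  have hvnorm : ‖v‖ = 1 := by
    rw [hv, norm_smul, norm_inv, norm_norm]
    exact inv_mul_cancel₀ (norm_ne_zero_iff.mpr hv0ne)
  have hTv : T v ≠ 0 := by
    have h1 : T v = ‖v0‖⁻¹ • T v0 := by rw [hv]; exact T.map_smul _ _
    rw [h1]
    exact smul_ne_zero (inv_ne_zero (norm_ne_zero_iff.mpr hv0ne)) hv0
  haveI : Nontrivial E := ⟨⟨v0, 0, hv0ne⟩⟩
  set c := ‖T v‖ with hc
  have hcpos : 0 < c := norm_pos_iff.mpr hTv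
  have hTnn : (0:ℝ) ≤ ‖T‖ := norm_nonneg _
  set ε := c / (2 * (‖T‖ + 1)) with hε
  have hεpos : 0 < ε := by positivity
  have hcT : c ≤ ‖T‖ := by
    calc c = ‖T v‖ := rfl
      _ ≤ ‖T‖ * ‖v‖ := T.le_opNorm v
      _ = ‖T‖ := by rw [hvnorm, mul_one]
  have hεT : ‖T‖ * ε ≤ c / 2 := by
    rw [hε, mul_comm, div_mul_eq_mul_div,
      div_le_div_iff₀ (by positivity) (by norm_num : (0:ℝ) < 2)]
    nlinarith
  have hε1 : ε ≤ 1 := by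
    rw [hε, div_le_one (by positivity)]
    nlinarith
  set D := finrank ℝ E with hD
  have hDpos : 0 < D := finrank_pos
  set κ : ENNReal := ENNReal.ofReal ((ε/2)^D) with hκ
  have hκ0 : κ ≠ 0 := by
    rw [hκ]
    simp only [ne_eq, ENNReal.ofReal_eq_zero, not_le]
    positivity
  have hκtop : κ ≠ ⊤ := ENNReal.ofReal_ne_top
  have h1κ : (1:ENNReal) - κ < 1 := ENNReal.sub_lt_self ENNReal.one_ne_top one_ne_zero hκ0
  have hev1 : ∀ᶠ R in 𝓝[>] (0:ℝ),
      1 - κ < μ (s ∩ closedBall x R) / μ (closedBall x R) :=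
    hdens.eventually (eventually_gt_nhds h1κ)
  have hlo := hd.hasFDerivAt.isLittleO
  have hδ := hlo.bound (show (0:ℝ) < c/8 by positivity)
  rw [Metric.eventually_nhds_iff] at hδ
  obtain ⟨r₁, hr₁pos, hδ'⟩ := hδ
  have hev2 : ∀ᶠ R in 𝓝[>] (0:ℝ), R < r₁ ∧ 0 < R := by
    filter_upwards [Ioo_mem_nhdsGT_of_mem (Set.mem_Ico.mpr ⟨le_refl 0, hr₁pos⟩)] with R hR
    exact ⟨hR.2, hR.1⟩
  obtain ⟨R, hRlt, hRr₁, hRpos⟩ := (hev1.and hev2).exists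
  set ρ := R/2 with hρ
  have hρpos : 0 < ρ := by positivity
  set B' := ball (x + ρ • v) (ε * ρ) with hB'
  have hB'sub : B' ⊆ closedBall x R := by
    intro y hy
    have h1 : dist y (x + ρ•v) < ε * ρ := mem_ball.mp hy
    have h2 : dist (x + ρ•v) x = ρ := by
      rw [dist_eq_norm]
      simp only [add_sub_cancel_left, norm_smul, Real.norm_eq_abs, abs_of_pos hρpos, hvnorm,
        mul_one]
    rw [mem_closedBall]
    calc dist y x ≤ dist y (x+ρ•v) + dist (x+ρ•v) x := dist_triangle _ _ _
      _ ≤ ε*ρ + ρ := by rw [h2]; exact add_le_add_left h1.le _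
      _ ≤ R := by rw [hρ]; nlinarith
  have hmeets : (s ∩ B').Nonempty := by
    by_contra hemp
    rw [Set.not_nonempty_iff_eq_empty] at hemp
    have hsub2 : s ∩ closedBall x R ⊆ closedBall x R \ B' := by
      rintro y ⟨hys, hyc⟩
      refine ⟨hyc, fun hyB => ?_⟩
      have : y ∈ s ∩ B' := ⟨hys, hyB⟩
      rw [hemp] at this
      exact this
    have hμB'top : μ B' ≠ ⊤ := measure_ball_lt_top.ne
    have hle : μ (s ∩ closedBall x R) ≤ μ (closedBall x R) - μ B' := by
      refine le_trans (measure_mono hsub2) ?_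
      rw [measure_diff hB'sub measurableSet_ball.nullMeasurableSet hμB'top]
    have hCB0 : μ (closedBall x R) ≠ 0 := (measure_closedBall_pos μ x hRpos).ne'
    have hCBtop : μ (closedBall x R) ≠ ⊤ := measure_closedBall_lt_top.ne
    have hball01 : μ (ball (0:E) 1) ≠ 0 := (measure_ball_pos μ 0 one_pos).ne'
    have hball01top : μ (ball (0:E) 1) ≠ ⊤ := measure_ball_lt_top.ne
    have hκeq : κ = μ B' / μ (closedBall x R) := by
      rw [ENNReal.eq_div_iff hCB0 hCBtop, hB',
        Measure.addHaar_ball μ _ (by positivity : (0:ℝ) ≤ ε*ρ),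
        Measure.addHaar_closedBall μ x hRpos.le, hκ]
      rw [mul_comm (ENNReal.ofReal (R ^ D) * μ (ball 0 1)) _, ← mul_assoc,
        ← ENNReal.ofReal_mul (by positivity)]
      congr 2
      rw [← mul_pow]
      congr 1
      rw [hρ]; ring
    have hfinal : μ (s ∩ closedBall x R) / μ (closedBall x R) ≤ 1 - κ := by
      rw [hκeq]
      refine ENNReal.le_sub_of_add_le_right (ENNReal.div_lt_top measure_ball_lt_top.ne hCB0).ne ?_
      calc μ (s ∩ closedBall x R) / μ (closedBall x R) + μ B' / μ (closedBall x R)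
          ≤ (μ (closedBall x R) - μ B') / μ (closedBall x R) + μ B' / μ (closedBall x R) :=
            add_le_add_left (ENNReal.div_le_div_right hle _) _
        _ = ((μ (closedBall x R) - μ B') + μ B') / μ (closedBall x R) :=
            ENNReal.div_add_div_same
        _ = μ (closedBall x R) / μ (closedBall x R) := by
            rw [tsub_add_cancel_of_le (measure_mono hB'sub)]
        _ = 1 := ENNReal.div_self hCB0 hCBtop
    exact absurd hRlt (not_lt.mpr hfinal)
  obtain ⟨y, hys, hyB⟩ := hmeets
  have hyx : ‖y - x‖ ≤ R := by
    have := hB'sub hyB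
    rwa [mem_closedBall, dist_eq_norm] at this
  have hyball : dist y x < r₁ := lt_of_le_of_lt (by rwa [dist_eq_norm]) hRr₁
  have hgy : g y = 0 := hg0 y hys
  have hgx : g x = 0 := hg0 x hx
  have hlit : ‖g y - g x - T (y - x)‖ ≤ c/8 * ‖y - x‖ := hδ' hyball
  have hTyx : ‖T (y - x)‖ ≤ c/8 * ‖y-x‖ := by
    have : g y - g x - T (y - x) = -(T (y - x)) := by rw [hgy, hgx]; abel
    rw [this, norm_neg] at hlit
    exact hlit
  have hdiff : ‖y - x - ρ • v‖ ≤ ε * ρ := by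
    have h1 := mem_ball.mp hyB
    rw [dist_eq_norm] at h1
    have : y - (x + ρ•v) = y - x - ρ•v := by abel
    rw [this] at h1
    exact h1.le
  have h1 : ‖T (ρ • v)‖ = c * ρ := by
    rw [T.map_smul, norm_smul, Real.norm_eq_abs, abs_of_pos hρpos, ← hc]
    ring
  have h2 : T (ρ • v) = T (y - x) - T (y - x - ρ • v) := by
    rw [← T.map_sub]
    congr 1
    abel
  have e1 : ‖T (y - x)‖ ≤ c/8 * R :=
    le_trans hTyx (mul_le_mul_of_nonneg_left hyx (by positivity))
  have e2 : ‖T (y - x - ρ • v)‖ ≤ ‖T‖ * (ε * ρ) :=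
    le_trans (T.le_opNorm _) (mul_le_mul_of_nonneg_left hdiff hTnn)
  have e4 : ‖T‖ * (ε * ρ) ≤ (c/2) * ρ := by
    rw [← mul_assoc]
    exact mul_le_mul_of_nonneg_right hεT hρpos.le
  have hstep1 : ‖T (ρ • v)‖ ≤ ‖T (y - x)‖ + ‖T (y - x - ρ • v)‖ := by
    rw [h2]; exact norm_sub_le _ _
  have e3 : c * ρ ≤ c/8 * R + (c/2) * ρ := by
    linarith [hstep1, e1, le_trans e2 e4, h1.le, h1.ge]
  have hR2 : R = 2 * ρ := by rw [hρ]; ring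
  rw [hR2] at e3
  have e5 : c * ρ ≤ (c/8*2 + c/2) * ρ := by linarith
  have e6 : c ≤ c/8*2 + c/2 := (mul_le_mul_iff_left₀ hρpos).mp e5
  linarith

end Density

section AnalyticNull

open Filter Metric
open scoped Topology ENNReal

/-- The zero set of a non-identically-zero analytic function on a connected open set
has Lebesgue measure zero. -/
theorem analytic_null {d : ℕ} {Ω : Set (Fin d → ℝ)} (hΩ : IsOpen Ω) (hconn : IsPreconnected Ω)
    {f : (Fin d → ℝ) → ℝ} (hf : AnalyticOnNhd ℝ f Ω) {x₀ : Fin d → ℝ} (hx₀ : x₀ ∈ Ω)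
    (hf0 : f x₀ ≠ 0) : volume {x | x ∈ Ω ∧ f x = 0} = 0 := by
  classical
  by_contra hvol
  set Z : ℕ → Set (Fin d → ℝ) :=
    fun n => {x | x ∈ Ω ∧ ∀ j ≤ n, iteratedFDeriv ℝ j f x = 0} with hZdef
  set Z0 : Set (Fin d → ℝ) := {x | x ∈ Ω ∧ f x = 0} with hZ0def
  have hZ0sub : Z0 ⊆ Z 0 := by
    rintro x ⟨hxΩ, hxf⟩
    refine ⟨hxΩ, fun j hj => ?_⟩
    interval_cases j
    ext m
    rw [iteratedFDeriv_zero_apply, hxf]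
    rfl
  have hconts : ∀ j : ℕ, ContinuousOn (iteratedFDeriv ℝ j f) Ω :=
    fun j => (hf.iteratedFDeriv j).continuousOn
  have hZmeas : ∀ n, MeasurableSet (Z n) := by
    intro n
    have : Z n = Ω ∩ ⋂ j ∈ Finset.range (n+1),
        (Ω \ (Ω ∩ (iteratedFDeriv ℝ j f) ⁻¹' {y | y ≠ 0})) := by
      ext x
      simp only [hZdef, Set.mem_setOf_eq, Set.mem_inter_iff, Set.mem_iInter, Finset.mem_range,
        Set.mem_diff, Set.mem_preimage, Set.mem_setOf_eq, not_and, not_ne_iff]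
      constructor
      · rintro ⟨hxΩ, hall⟩
        exact ⟨hxΩ, fun j hj => ⟨hxΩ, fun _ => hall j (Nat.lt_succ_iff.mp hj)⟩⟩
      · rintro ⟨hxΩ, hall⟩
        exact ⟨hxΩ, fun j hj => (hall j (Nat.lt_succ_iff.mpr hj)).2 hxΩ⟩
    rw [this]
    refine hΩ.measurableSet.inter (Finset.measurableSet_biInter _ fun j _ => ?_)
    exact (hΩ.measurableSet.diff
      (((hconts j).isOpen_inter_preimage hΩ (isOpen_ne_fun continuous_id continuous_const)).measurableSet))
  have hstep : ∀ n, volume (Z n \ Z (n+1)) = 0 := by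
    intro n
    have hae := Besicovitch.ae_tendsto_measure_inter_div volume (Z n)
    have hmem := ae_restrict_mem (μ := volume) (hZmeas n)
    have hsuff : ∀ᵐ x ∂(volume.restrict (Z n)), x ∈ Z (n+1) := by
      filter_upwards [hae, hmem] with x hxd hxZ
      refine ⟨hxZ.1, fun j hj => ?_⟩
      rcases Nat.lt_or_ge j (n+1) with hlt | hge
      · exact hxZ.2 j (Nat.lt_succ_iff.mp hlt)
      · have hj' : j = n + 1 := le_antisymm hj hge
        subst hj'
        have hgdiff : DifferentiableAt ℝ (iteratedFDeriv ℝ n f) x :=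
          ((hf.iteratedFDeriv n) x hxZ.1).differentiableAt
        have hg0 : ∀ y ∈ Z n, iteratedFDeriv ℝ n f y = 0 := fun y hy => hy.2 n le_rfl
        have hfd : fderiv ℝ (iteratedFDeriv ℝ n f) x = 0 :=
          fderiv_eq_zero_of_zero_on_density volume hxZ hg0 hgdiff hxd
        rw [iteratedFDeriv_succ_eq_comp_left]
        simp only [Function.comp_apply, hfd, LinearIsometryEquiv.map_zero]
    have h0 : (volume.restrict (Z n)) ((Z (n+1))ᶜ) = 0 := by
      rw [MeasureTheory.ae_iff] at hsuff
      rw [Set.compl_def]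
      exact hsuff
    rw [Measure.restrict_apply (hZmeas (n+1)).compl] at h0
    have hdiffeq : Z n \ Z (n+1) = (Z (n+1))ᶜ ∩ Z n := by
      rw [Set.diff_eq, Set.inter_comm]
    rw [hdiffeq]
    exact h0
  have hsub : Z0 \ (⋂ n, Z n) ⊆ ⋃ n, (Z n \ Z (n+1)) := by
    rintro x ⟨hx0, hxI⟩
    simp only [Set.mem_iInter, not_forall] at hxI
    have hex : ∃ n, x ∉ Z n := hxI
    set n₀ := Nat.find hex with hn₀
    have hfind : x ∉ Z n₀ := Nat.find_spec hex
    have hn₀pos : 0 < n₀ := by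
      rcases Nat.eq_zero_or_pos n₀ with h | h
      · exfalso; rw [h] at hfind; exact hfind (hZ0sub hx0)
      · exact h
    have hprev : x ∈ Z (n₀ - 1) := by
      by_contra hcon
      have hle : Nat.find hex ≤ n₀ - 1 := Nat.find_le hcon
      rw [← hn₀] at hle
      omega
    refine Set.mem_iUnion.mpr ⟨n₀ - 1, hprev, ?_⟩
    have : n₀ - 1 + 1 = n₀ := by omega
    rw [this]
    exact hfind
  have hZI : volume (Z0 \ ⋂ n, Z n) = 0 :=
    measure_mono_null hsub (measure_iUnion_null hstep)
  have hnon : (Z0 ∩ ⋂ n, Z n).Nonempty := by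
    by_contra hemp
    rw [Set.not_nonempty_iff_eq_empty] at hemp
    have : Z0 ⊆ Z0 \ ⋂ n, Z n := by
      intro x hx
      refine ⟨hx, fun hxI => ?_⟩
      have : x ∈ Z0 ∩ ⋂ n, Z n := ⟨hx, hxI⟩
      rw [hemp] at this
      exact this
    exact hvol (measure_mono_null this hZI)
  obtain ⟨xs, hxs0, hxsI⟩ := hnon
  have hall : ∀ n, iteratedFDeriv ℝ n f xs = 0 :=
    fun n => (Set.mem_iInter.mp hxsI n).2 n le_rfl
  obtain ⟨p, hp⟩ := hf xs hxs0.1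
  obtain ⟨r, hpb⟩ := hp
  have hev : f =ᶠ[𝓝 xs] 0 := by
    have hball : ∀ y ∈ Metric.eball (0 : Fin d → ℝ) r, f (xs + y) = 0 := by
      intro y hy
      have hs := hpb.hasSum hy
      have hz : ∀ n, (p n fun _ => y) = 0 := by
        intro n
        have h1 := hpb.factorial_smul y n
        rw [hall n] at h1
        simp only [ContinuousMultilinearMap.zero_apply] at h1
        have := smul_eq_zero.mp h1
        rcases this with h | h
        · exact absurd h (Nat.factorial_ne_zero n)
        · exact h
      rw [funext hz] at hs
      exact hs.unique hasSum_zero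
    rw [Filter.eventuallyEq_iff_exists_mem]
    refine ⟨Metric.eball xs r, Metric.eball_mem_nhds xs hpb.r_pos, fun z hz => ?_⟩
    have h1 : z - xs ∈ Metric.eball (0 : Fin d → ℝ) r := by
      rw [Metric.mem_eball] at hz ⊢
      rw [show edist (z - xs) 0 = edist z xs by simp [edist_dist, dist_eq_norm]]
      exact hz
    have := hball (z - xs) h1
    rwa [add_sub_cancel] at this
  have := hf.eqOn_zero_of_preconnected_of_eventuallyEq_zero hconn hxs0.1 hev
  exact hf0 (this hx₀)

end AnalyticNull

section MainAux

open Module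

/-- On the manifold, the range of the Jacobian is contained in the kernel of the
local submersion. -/
lemma range_fderiv_le_ker {d m ρm : ℕ} {Ξ : Set (Fin d → ℝ)} (hopen : IsOpen Ξ)
    {𝒢 : (Fin d → ℝ) → (Fin m → ℝ)} (h𝒢 : AnalyticOnNhd ℝ 𝒢 Ξ) {U : Set (Fin m → ℝ)}
    (hUopen : IsOpen U) {φ : (Fin m → ℝ) → (Fin ρm → ℝ)} (hφC2 : ContDiffOn ℝ 2 φ U)
    (hMU : (𝒢 '' Ξ) ∩ U = {y ∈ U | φ y = 0}) {ξ : Fin d → ℝ} (hξ : ξ ∈ Ξ) (hU : 𝒢 ξ ∈ U) :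
    LinearMap.range (fderiv ℝ 𝒢 ξ).toLinearMap ≤ LinearMap.ker (fderiv ℝ φ (𝒢 ξ)).toLinearMap := by
  have hO : IsOpen {ξ' | ξ' ∈ Ξ ∧ 𝒢 ξ' ∈ U} := by
    have h1 := (h𝒢.continuousOn).isOpen_inter_preimage hopen hUopen
    have h2 : Ξ ∩ 𝒢 ⁻¹' U = {ξ' | ξ' ∈ Ξ ∧ 𝒢 ξ' ∈ U} := rfl
    rwa [h2] at h1
  have hξO : ξ ∈ {ξ' | ξ' ∈ Ξ ∧ 𝒢 ξ' ∈ U} := ⟨hξ, hU⟩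
  have hφdiff : DifferentiableAt ℝ φ (𝒢 ξ) :=
    (hφC2.contDiffAt (hUopen.mem_nhds hU)).differentiableAt (by norm_num)
  have h𝒢diff : DifferentiableAt ℝ 𝒢 ξ := (h𝒢 ξ hξ).differentiableAt
  have hcompev : (φ ∘ 𝒢) =ᶠ[nhds ξ] (fun _ => (0 : Fin ρm → ℝ)) := by
    rw [Filter.eventuallyEq_iff_exists_mem]
    refine ⟨_, hO.mem_nhds hξO, fun z hz => ?_⟩
    have hmem : 𝒢 z ∈ (𝒢 '' Ξ) ∩ U := ⟨⟨z, hz.1, rfl⟩, hz.2⟩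
    rw [hMU] at hmem
    exact hmem.2
  have hfz : fderiv ℝ (φ ∘ 𝒢) ξ = 0 := by
    rw [hcompev.fderiv_eq]
    exact fderiv_const_apply 0
  have hchain : fderiv ℝ (φ ∘ 𝒢) ξ = (fderiv ℝ φ (𝒢 ξ)).comp (fderiv ℝ 𝒢 ξ) :=
    fderiv_comp ξ hφdiff h𝒢diff
  rintro _ ⟨a, rfl⟩
  have h3 : (fderiv ℝ φ (𝒢 ξ)).comp (fderiv ℝ 𝒢 ξ) a = 0 := by
    rw [← hchain, hfz]
    rfl
  exact h3

end MainAux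

open Module in
theorem wellPosed_iff_characteristicRank_add
    {d m k : ℕ} {Ξ : Set (Fin d → ℝ)}
    (hne : Ξ.Nonempty) (hopen : IsOpen Ξ) (hconn : IsConnected Ξ)
    {𝒢 : (Fin d → ℝ) → (Fin m → ℝ)} (h𝒢 : AnalyticOnNhd ℝ 𝒢 Ξ)
    (ρ : ℕ) (hρ : IsGreatest (jRank 𝒢 '' Ξ) ρ)
    (A : Matrix (Fin m) (Fin k) ℝ) (hA : A.rank = k)
    (L : Submodule ℝ (Fin m → ℝ)) (hL : L = LinearMap.range A.mulVecLin)
    (G : ((Fin d → ℝ) × (Fin k → ℝ)) → (Fin m → ℝ))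
    (hG : ∀ ξ ζ, G (ξ, ζ) = 𝒢 ξ + A.mulVec ζ)
    (𝔯 : ℕ) (h𝔯 : IsGreatest (jRank G '' (Ξ ×ˢ (Set.univ : Set (Fin k → ℝ)))) 𝔯) :
    ((∃ x ∈ 𝒢 '' Ξ, WellPosedAt (𝒢 '' Ξ) L ρ x) → 𝔯 = ρ + k) ∧
    ((∀ x ∈ 𝒢 '' Ξ, IsManifoldAt (𝒢 '' Ξ) ρ x) → 𝔯 = ρ + k →
      ∃ Υ : Set (Fin d → ℝ), Υ ⊆ Ξ ∧ volume Υ = 0 ∧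
        ∀ ξ ∈ Ξ \ Υ, WellPosedAt (𝒢 '' Ξ) L ρ (𝒢 ξ)) := by
  subst hL
  classical
  -- Basic setup
  set Ccl : (Fin k → ℝ) →L[ℝ] (Fin m → ℝ) := LinearMap.toContinuousLinearMap A.mulVecLin
    with hCcl
  have hCclapp : ∀ c, Ccl c = A.mulVecLin c := fun c => rfl
  set Dmap : (Fin d → ℝ) → (((Fin d → ℝ) × (Fin k → ℝ)) →L[ℝ] (Fin m → ℝ)) :=
    fun ξ => (fderiv ℝ 𝒢 ξ).comp (ContinuousLinearMap.fst ℝ _ _)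
      + Ccl.comp (ContinuousLinearMap.snd ℝ _ _) with hDmap
  have hDapp : ∀ ξ p, Dmap ξ p = fderiv ℝ 𝒢 ξ p.1 + A.mulVecLin p.2 := fun ξ p => rfl
  have hGfun : G = fun p => 𝒢 p.1 + A.mulVec p.2 := funext fun p => hG p.1 p.2
  have hDG : ∀ ξ ∈ Ξ, ∀ ζ, HasFDerivAt G (Dmap ξ) (ξ, ζ) := by
    intro ξ hξ ζ
    rw [hGfun]
    have h1 : HasFDerivAt (fun p : (Fin d → ℝ) × (Fin k → ℝ) => 𝒢 p.1)
        ((fderiv ℝ 𝒢 ξ).comp (ContinuousLinearMap.fst ℝ (Fin d → ℝ) (Fin k → ℝ))) (ξ, ζ) :=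
      ((h𝒢 ξ hξ).differentiableAt.hasFDerivAt).comp (ξ, ζ) hasFDerivAt_fst
    have h2 : HasFDerivAt (fun p : (Fin d → ℝ) × (Fin k → ℝ) => A.mulVec p.2)
        (Ccl.comp (ContinuousLinearMap.snd ℝ (Fin d → ℝ) (Fin k → ℝ))) (ξ, ζ) := by
      have h2' : HasFDerivAt (fun p : (Fin d → ℝ) × (Fin k → ℝ) => Ccl p.2)
          (Ccl.comp (ContinuousLinearMap.snd ℝ (Fin d → ℝ) (Fin k → ℝ))) (ξ, ζ) :=
        Ccl.hasFDerivAt.comp (ξ, ζ) hasFDerivAt_snd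
      exact h2'
    exact h1.add h2
  have hfderivG : ∀ ξ ∈ Ξ, ∀ ζ, fderiv ℝ G (ξ, ζ) = Dmap ξ := fun ξ hξ ζ => (hDG ξ hξ ζ).fderiv
  have hrange : ∀ ξ, LinearMap.range (Dmap ξ).toLinearMap
      = LinearMap.range (fderiv ℝ 𝒢 ξ).toLinearMap ⊔ LinearMap.range A.mulVecLin := by
    intro ξ
    apply le_antisymm
    · rintro y ⟨⟨a, b⟩, rfl⟩
      rw [ContinuousLinearMap.coe_coe, hDapp]
      exact Submodule.add_mem_sup ⟨a, rfl⟩ ⟨b, rfl⟩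
    · rw [sup_le_iff]
      constructor
      · rintro y ⟨a, rfl⟩
        refine ⟨(a, 0), ?_⟩
        rw [ContinuousLinearMap.coe_coe, hDapp]
        simp
      · rintro y ⟨b, rfl⟩
        refine ⟨(0, b), ?_⟩
        rw [ContinuousLinearMap.coe_coe, hDapp]
        simp
  have hLrank : finrank ℝ (LinearMap.range A.mulVecLin) = k := hA
  have hCinj : Function.Injective A.mulVecLin := by
    have h1 := LinearMap.finrank_range_add_finrank_ker A.mulVecLin
    rw [hLrank, Module.finrank_fin_fun] at h1
    have h2 : finrank ℝ (LinearMap.ker A.mulVecLin) = 0 := by omega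
    rw [← LinearMap.ker_eq_bot]
    exact Submodule.finrank_eq_zero.mp h2
  have hponder : ∀ ξ ∈ Ξ, finrank ℝ (LinearMap.range (fderiv ℝ 𝒢 ξ).toLinearMap) ≤ ρ :=
    fun ξ hξ => hρ.2 ⟨ξ, hξ, rfl⟩
  have hsb : ∀ ξ ∈ Ξ, finrank ℝ
      ↥(LinearMap.range (fderiv ℝ 𝒢 ξ).toLinearMap ⊔ LinearMap.range A.mulVecLin) ≤ ρ + k := by
    intro ξ hξ
    have h1 := Submodule.finrank_sup_add_finrank_inf_eq
      (LinearMap.range (fderiv ℝ 𝒢 ξ).toLinearMap) (LinearMap.range A.mulVecLin)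
    have h2 := hponder ξ hξ
    rw [hLrank] at h1
    omega
  have h𝔯le : 𝔯 ≤ ρ + k := by
    obtain ⟨⟨ξ, ζ⟩, hmem, hval⟩ := h𝔯.1
    rw [← hval]
    show finrank ℝ (LinearMap.range (fderiv ℝ G (ξ, ζ)).toLinearMap) ≤ ρ + k
    rw [hfderivG ξ hmem.1 ζ, hrange ξ]
    exact hsb ξ hmem.1
  -- analyticity of Jacobian entries
  have hJan : AnalyticOnNhd ℝ (fderiv ℝ 𝒢) Ξ := h𝒢.fderiv
  have happ : ∀ u : Fin d → ℝ, AnalyticOnNhd ℝ (fun ξ => fderiv ℝ 𝒢 ξ u) Ξ := by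
    intro u
    exact (ContinuousLinearMap.apply ℝ (Fin m → ℝ) u).comp_analyticOnNhd hJan
  have hcoordan : ∀ (u : Fin d → ℝ) (l : Fin m),
      AnalyticOnNhd ℝ (fun ξ => fderiv ℝ 𝒢 ξ u l) Ξ := by
    intro u l
    have h1 := (ContinuousLinearMap.proj (R := ℝ) (φ := fun _ : Fin m => ℝ) l).comp_analyticOnNhd
      (happ u)
    simpa [Function.comp_def] using h1
  constructor
  · -- Part (i)
    rintro ⟨x, ⟨ξ₀, hξ₀, rfl⟩, U, φ, ⟨hUopen, hxU, hφC2, hφsurj, hMU⟩, hker⟩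
    obtain ⟨ξρ, hξρ, hjρ⟩ := hρ.1
    have hρle : ρ ≤ finrank ℝ (LinearMap.range (fderiv ℝ 𝒢 ξρ).toLinearMap) := le_of_eq hjρ.symm
    obtain ⟨v, hv⟩ := exists_indep_of_le_finrank_range
      ((fderiv ℝ 𝒢 ξρ : (Fin d → ℝ) →ₗ[ℝ] (Fin m → ℝ))) hρle
    set ψ : (Fin d → ℝ) → ℝ := fun ξ => (Matrix.of fun i j =>
      dotProduct (fderiv ℝ 𝒢 ξ (v i)) (fderiv ℝ 𝒢 ξ (v j))).det with hψ
    have hψan : AnalyticOnNhd ℝ ψ Ξ := by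
      apply analyticOnNhd_det
      intro i j
      have hexp : (fun x => (Matrix.of fun i j =>
          dotProduct (fderiv ℝ 𝒢 x (v i)) (fderiv ℝ 𝒢 x (v j))) i j)
          = fun x => ∑ l, fderiv ℝ 𝒢 x (v i) l * fderiv ℝ 𝒢 x (v j) l := by
        funext x; simp [dotProduct]
      rw [hexp]
      exact Finset.analyticOnNhd_fun_sum _ fun l _ =>
        (hcoordan (v i) l).mul (hcoordan (v j) l)
    have hψρ : ψ ξρ ≠ 0 := (gram_det_ne_zero_iff _).mpr hv
    have hψrank : ∀ ξ ∈ Ξ, ψ ξ ≠ 0 → finrank ℝ (LinearMap.range (fderiv ℝ 𝒢 ξ).toLinearMap) = ρ := by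
      intro ξ hξ hne'
      have hind := (gram_det_ne_zero_iff _).mp hne'
      have h1 : ρ ≤ finrank ℝ (LinearMap.range (fderiv ℝ 𝒢 ξ).toLinearMap) :=
        card_le_finrank_range_of_indep _ v hind
      exact le_antisymm (hponder ξ hξ) h1
    -- continuity/openness of the transversality condition
    set x₀ := 𝒢 ξ₀ with hx₀def
    set Tly : (Fin m → ℝ) → ((Fin k → ℝ) →L[ℝ] (Fin (m - ρ) → ℝ)) :=
      fun y => (fderiv ℝ φ y).comp Ccl with hTly
    set σf : (Fin m → ℝ) → ℝ := fun y => (Matrix.of fun i j =>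
      dotProduct (Tly y (Pi.single i 1)) (Tly y (Pi.single j 1))).det with hσf
    have hφfdcont : ContinuousOn (fderiv ℝ φ) U :=
      hφC2.continuousOn_fderiv_of_isOpen hUopen (by norm_num)
    have hTapp : ∀ c : Fin k → ℝ, ContinuousOn (fun y => Tly y c) U := by
      intro c
      exact (ContinuousLinearMap.apply ℝ (Fin (m - ρ) → ℝ) (Ccl c)).continuous.comp_continuousOn
        hφfdcont
    have hσcont : ContinuousOn σf U := by
      apply continuousOn_det'
      intro i j
      have hexp : (fun y => (Matrix.of fun i j =>
          dotProduct (Tly y (Pi.single i 1)) (Tly y (Pi.single j 1))) i j)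
          = fun y => ∑ l, Tly y (Pi.single i 1) l * Tly y (Pi.single j 1) l := by
        funext y; simp [dotProduct]
      rw [hexp]
      exact continuousOn_finset_sum _ fun l _ =>
        (((continuous_apply l).comp_continuousOn (hTapp (Pi.single i 1)))).mul
          ((continuous_apply l).comp_continuousOn (hTapp (Pi.single j 1)))
    have hT0inj : ∀ c, Tly x₀ c = 0 → c = 0 := by
      intro c hc
      have h1 : A.mulVecLin c ∈ LinearMap.ker (fderiv ℝ φ x₀).toLinearMap ⊓ LinearMap.range A.mulVecLin := by
        refine Submodule.mem_inf.mpr ⟨?_, ⟨c, rfl⟩⟩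
        show fderiv ℝ φ x₀ (A.mulVecLin c) = 0
        exact hc
      rw [hker] at h1
      have h2 : A.mulVecLin c = 0 := h1
      have h3 : A.mulVecLin c = A.mulVecLin 0 := by rw [h2, map_zero]
      exact hCinj h3
    have hTinj : Function.Injective (Tly x₀) := by
      intro a b hab
      have h1 : Tly x₀ (a - b) = 0 := by rw [map_sub, hab, sub_self]
      have h2 := hT0inj _ h1
      exact sub_eq_zero.mp h2
    have hindT : LinearIndependent ℝ (fun i => Tly x₀ (Pi.single i 1)) := by
      have := linearIndependent_single_one.map'
        ((Tly x₀ : (Fin k → ℝ) →ₗ[ℝ] (Fin (m - ρ) → ℝ)))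
        (LinearMap.ker_eq_bot.mpr (by exact hTinj))
      exact this
    have hσx : σf x₀ ≠ 0 := (gram_det_ne_zero_iff _).mpr hindT
    have hσat : ContinuousAt σf x₀ := hσcont.continuousAt (hUopen.mem_nhds hxU)
    have hσev : ∀ᶠ y in nhds x₀, σf y ≠ 0 := hσat.eventually_ne hσx
    have hUev : ∀ᶠ y in nhds x₀, y ∈ U := hUopen.mem_nhds hxU
    have h𝒢cont : ContinuousAt 𝒢 ξ₀ := (h𝒢 ξ₀ hξ₀).continuousAt
    have hΞev : ∀ᶠ ξ' in nhds ξ₀, ξ' ∈ Ξ := hopen.mem_nhds hξ₀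
    have hcomb : ∀ᶠ ξ' in nhds ξ₀, (𝒢 ξ' ∈ U ∧ σf (𝒢 ξ') ≠ 0) ∧ ξ' ∈ Ξ :=
      (h𝒢cont.eventually (hUev.and hσev)).and hΞev
    obtain ⟨O, hOsub, hOopen, hOx⟩ := eventually_nhds_iff.mp hcomb
    have hξ₁ : ∃ ξ₁ ∈ O, ψ ξ₁ ≠ 0 := by
      by_contra hcon
      push_neg at hcon
      have hev0 : ψ =ᶠ[nhds ξ₀] 0 := by
        rw [Filter.eventuallyEq_iff_exists_mem]
        exact ⟨O, hOopen.mem_nhds hOx, fun z hz => hcon z hz⟩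
      have := hψan.eqOn_zero_of_preconnected_of_eventuallyEq_zero
        hconn.isPreconnected hξ₀ hev0
      exact hψρ (this hξρ)
    obtain ⟨ξ₁, hξ₁O, hψ₁⟩ := hξ₁
    obtain ⟨⟨h𝒢U, hσ₁⟩, hξ₁Ξ⟩ := hOsub ξ₁ hξ₁O
    have hrankξ₁ : finrank ℝ (LinearMap.range (fderiv ℝ 𝒢 ξ₁).toLinearMap) = ρ := hψrank ξ₁ hξ₁Ξ hψ₁
    -- kernel condition at 𝒢 ξ₁
    have hind₁ := (gram_det_ne_zero_iff _).mp hσ₁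
    have hinj₁ : Function.Injective (Tly (𝒢 ξ₁)) :=
      injective_of_indep_single ((Tly (𝒢 ξ₁) : (Fin k → ℝ) →ₗ[ℝ] (Fin (m - ρ) → ℝ))) hind₁
    have hker₁ : LinearMap.ker (fderiv ℝ φ (𝒢 ξ₁)).toLinearMap ⊓ LinearMap.range A.mulVecLin = ⊥ := by
      rw [Submodule.eq_bot_iff]
      intro z hz
      obtain ⟨hz1, c, hc⟩ := Submodule.mem_inf.mp hz
      have h1 : Tly (𝒢 ξ₁) c = 0 := by
        show fderiv ℝ φ (𝒢 ξ₁) (A.mulVecLin c) = 0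
        rw [hc]
        exact hz1
      have h2 : Tly (𝒢 ξ₁) c = Tly (𝒢 ξ₁) 0 := by rw [h1, map_zero]
      have h3 := hinj₁ h2
      rw [← hc, h3, map_zero]
    have hsubker := range_fderiv_le_ker hopen h𝒢 hUopen hφC2 hMU hξ₁Ξ h𝒢U
    have hinf : LinearMap.range (fderiv ℝ 𝒢 ξ₁).toLinearMap ⊓ LinearMap.range A.mulVecLin = ⊥ := by
      have h1 : LinearMap.range (fderiv ℝ 𝒢 ξ₁).toLinearMap ⊓ LinearMap.range A.mulVecLin
          ≤ LinearMap.ker (fderiv ℝ φ (𝒢 ξ₁)).toLinearMap ⊓ LinearMap.range A.mulVecLin :=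
        inf_le_inf_right _ hsubker
      rw [hker₁] at h1
      exact le_bot_iff.mp h1
    have hsupeq : finrank ℝ
        ↥(LinearMap.range (fderiv ℝ 𝒢 ξ₁).toLinearMap ⊔ LinearMap.range A.mulVecLin) = ρ + k := by
      have h1 := Submodule.finrank_sup_add_finrank_inf_eq
        (LinearMap.range (fderiv ℝ 𝒢 ξ₁).toLinearMap) (LinearMap.range A.mulVecLin)
      rw [hinf, hrankξ₁, hLrank, finrank_bot] at h1
      omega
    have hge : ρ + k ≤ 𝔯 := by
      refine h𝔯.2 ⟨(ξ₁, 0), ⟨hξ₁Ξ, Set.mem_univ _⟩, ?_⟩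
      show finrank ℝ (LinearMap.range (fderiv ℝ G (ξ₁, 0)).toLinearMap) = ρ + k
      rw [hfderivG ξ₁ hξ₁Ξ 0, hrange ξ₁]
      exact hsupeq
    omega
  · -- Part (ii)
    intro hmani h𝔯eq
    obtain ⟨⟨ξs, ζs⟩, hmems, hjs⟩ := h𝔯.1
    have hξs : ξs ∈ Ξ := hmems.1
    have hjs' : ρ + k ≤ finrank ℝ (LinearMap.range (Dmap ξs).toLinearMap) := by
      have h1 : jRank G (ξs, ζs) = finrank ℝ (LinearMap.range (Dmap ξs).toLinearMap) := by
        show finrank ℝ (LinearMap.range (fderiv ℝ G (ξs, ζs)).toLinearMap) = _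
        rw [hfderivG ξs hξs ζs]
      rw [← h1, hjs, h𝔯eq]
    obtain ⟨v, hv⟩ := exists_indep_of_le_finrank_range
      ((Dmap ξs : ((Fin d → ℝ) × (Fin k → ℝ)) →ₗ[ℝ] (Fin m → ℝ))) hjs'
    set w : (Fin d → ℝ) → Fin (ρ + k) → (Fin m → ℝ) :=
      fun ξ i => fderiv ℝ 𝒢 ξ (v i).1 + A.mulVecLin (v i).2 with hw
    have hweq : ∀ ξ i, w ξ i = Dmap ξ (v i) := fun ξ i => (hDapp ξ (v i)).symm
    set χ : (Fin d → ℝ) → ℝ := fun ξ => (Matrix.of fun i j =>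
      dotProduct (w ξ i) (w ξ j)).det with hχ
    have hχan : AnalyticOnNhd ℝ χ Ξ := by
      apply analyticOnNhd_det
      intro i j
      have hexp : (fun x => (Matrix.of fun i j =>
          dotProduct (w x i) (w x j)) i j)
          = fun x => ∑ l, (fderiv ℝ 𝒢 x (v i).1 l + A.mulVecLin (v i).2 l)
            * (fderiv ℝ 𝒢 x (v j).1 l + A.mulVecLin (v j).2 l) := by
        funext x; simp [hw, dotProduct]
      rw [hexp]
      refine Finset.analyticOnNhd_fun_sum _ fun l _ => AnalyticOnNhd.mul ?_ ?_
      · exact ((hcoordan (v i).1 l).add analyticOnNhd_const)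
      · exact ((hcoordan (v j).1 l).add analyticOnNhd_const)
    have hχs : χ ξs ≠ 0 := by
      apply (gram_det_ne_zero_iff _).mpr
      have hweq' : w ξs = fun i => Dmap ξs (v i) := funext (hweq ξs)
      rw [hweq']
      exact hv
    set Υ : Set (Fin d → ℝ) := {ξ | ξ ∈ Ξ ∧ χ ξ = 0} with hΥ
    have hΥvol : volume Υ = 0 :=
      analytic_null hopen hconn.isPreconnected hχan hξs hχs
    refine ⟨Υ, fun ξ hξ => hξ.1, hΥvol, ?_⟩
    rintro ξ ⟨hξΞ, hξΥ⟩
    have hχξ : χ ξ ≠ 0 := fun h => hξΥ ⟨hξΞ, h⟩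
    have hindξ := (gram_det_ne_zero_iff _).mp hχξ
    have hgeξ : ρ + k ≤ finrank ℝ (LinearMap.range (Dmap ξ).toLinearMap) := by
      apply card_le_finrank_range_of_indep
        ((Dmap ξ : ((Fin d → ℝ) × (Fin k → ℝ)) →ₗ[ℝ] (Fin m → ℝ))) v
      have hweq' : (fun i => Dmap ξ (v i)) = w ξ := (funext (hweq ξ)).symm
      show LinearIndependent ℝ (fun i => Dmap ξ (v i))
      rw [hweq']
      exact hindξ
    have hleξ : finrank ℝ (LinearMap.range (Dmap ξ).toLinearMap) ≤ ρ + k := by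
      rw [hrange ξ]
      exact hsb ξ hξΞ
    have hsupeq : finrank ℝ
        ↥(LinearMap.range (fderiv ℝ 𝒢 ξ).toLinearMap ⊔ LinearMap.range A.mulVecLin) = ρ + k := by
      rw [← hrange ξ]
      omega
    have h5 := Submodule.finrank_sup_add_finrank_inf_eq
      (LinearMap.range (fderiv ℝ 𝒢 ξ).toLinearMap) (LinearMap.range A.mulVecLin)
    rw [hsupeq, hLrank] at h5
    have hRngle := hponder ξ hξΞ
    have hRngeq : finrank ℝ (LinearMap.range (fderiv ℝ 𝒢 ξ).toLinearMap) = ρ := by omega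
    have hinf0 : finrank ℝ
        (LinearMap.range (fderiv ℝ 𝒢 ξ).toLinearMap ⊓ LinearMap.range A.mulVecLin : Submodule ℝ _) = 0 := by
      omega
    have hinfbot : LinearMap.range (fderiv ℝ 𝒢 ξ).toLinearMap ⊓ LinearMap.range A.mulVecLin = ⊥ :=
      Submodule.finrank_eq_zero.mp hinf0
    obtain ⟨U, φ, hUopen, hxU, hφC2, hφsurj, hMU⟩ := hmani (𝒢 ξ) ⟨ξ, hξΞ, rfl⟩
    have hsurj := hφsurj (𝒢 ξ) hxU
    have hrn := LinearMap.finrank_range_add_finrank_ker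
      ((fderiv ℝ φ (𝒢 ξ) : (Fin m → ℝ) →ₗ[ℝ] (Fin (m - ρ) → ℝ)))
    have hrtop : LinearMap.range (fderiv ℝ φ (𝒢 ξ)).toLinearMap = ⊤ := LinearMap.range_eq_top.mpr hsurj
    have hrcoe : LinearMap.range ((fderiv ℝ φ (𝒢 ξ) : (Fin m → ℝ) →ₗ[ℝ] (Fin (m - ρ) → ℝ)))
        = LinearMap.range (fderiv ℝ φ (𝒢 ξ)).toLinearMap := rfl
    have hkcoe : LinearMap.ker ((fderiv ℝ φ (𝒢 ξ) : (Fin m → ℝ) →ₗ[ℝ] (Fin (m - ρ) → ℝ)))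
        = LinearMap.ker (fderiv ℝ φ (𝒢 ξ)).toLinearMap := rfl
    rw [hrcoe, hkcoe, hrtop, finrank_top, Module.finrank_fin_fun, Module.finrank_fin_fun] at hrn
    have hρm : ρ ≤ m := by
      rw [← hRngeq]
      have := Submodule.finrank_le (LinearMap.range (fderiv ℝ 𝒢 ξ).toLinearMap)
      rw [Module.finrank_fin_fun] at this
      exact this
    have hkerρ : finrank ℝ (LinearMap.ker (fderiv ℝ φ (𝒢 ξ)).toLinearMap) = ρ := by omega
    have hsubker := range_fderiv_le_ker hopen h𝒢 hUopen hφC2 hMU hξΞ hxU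
    have hrkeq : LinearMap.range (fderiv ℝ 𝒢 ξ).toLinearMap = LinearMap.ker (fderiv ℝ φ (𝒢 ξ)).toLinearMap :=
      Submodule.eq_of_le_of_finrank_le hsubker (by rw [hkerρ, hRngeq])
    refine ⟨U, φ, ⟨hUopen, hxU, hφC2, hφsurj, hMU⟩, ?_⟩
    rw [← hrkeq]
    exact hinfbot
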